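/- For any two cells s and t of a simple hexagonal grid polygon P, the length of a shortest path in P from s to t is at most (1/4)·E(P) − 3/2. -/

import Mathlib

/-- A hexagonal grid cell in axial coordinates. -/
abbrev HexCell : Type := ℤ × ℤ

/-- The six neighbors of a hexagonal cell. -/
def hexNbrs (c : HexCell) : Finset HexCell :=
  {(c.1 + 1, c.2), (c.1 - 1, c.2), (c.1, c.2 + 1), (c.1, c.2 - 1),
   (c.1 + 1, c.2 - 1), (c.1 - 1, c.2 + 1)}

/-- Adjacency of hexagonal cells. -/
def hexAdj (a b : HexCell) : Prop := b ∈ hexNbrs a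

/-- A set `S` is connected under the relation `adj` (restricted to `S`). -/
def connectedOn {α : Type} (adj : α → α → Prop) (S : Set α) : Prop :=
  ∀ a ∈ S, ∀ b ∈ S, Relation.ReflTransGen (fun x y => x ∈ S ∧ y ∈ S ∧ adj x y) a b

/-- A hexagonal grid polygon: a finite nonempty set of cells, connected under adjacency. -/
def hexPolygon (P : Finset HexCell) : Prop :=
  P.Nonempty ∧ connectedOn hexAdj (↑P : Set HexCell)

/-- A hexagonal grid polygon is simple if its complement is connected under adjacency. -/
def hexSimple (P : Finset HexCell) : Prop :=
  connectedOn hexAdj ((↑P : Set HexCell)ᶜ)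

/-- The perimeter `E(P)`: the number of pairs `(c, c')` with `c ∈ P`, `c' ∉ P`, adjacent. -/
def hexPerim (P : Finset HexCell) : ℕ :=
  ∑ c ∈ P, (hexNbrs c \ P).card

/-- An exploration tour of `P`: a closed walk `w 0, w 1, …, w L` in `P`
(consecutive cells adjacent, `w 0 = w L`) visiting every cell of `P`;
its length is `L` (the number of steps). -/
def IsHexTour (P : Finset HexCell) (w : ℕ → HexCell) (L : ℕ) : Prop :=
  w 0 = w L ∧ (∀ i ≤ L, w i ∈ P) ∧ (∀ i < L, hexAdj (w i) (w (i + 1))) ∧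
    ∀ c ∈ P, ∃ i ≤ L, w i = c

/-- A path in `P` from `s` to `t`: a list of cells of `P`, consecutive cells adjacent;
its length (number of steps) is `l.length - 1`. -/
def IsHexPathIn (P : Finset HexCell) (l : List HexCell) (s t : HexCell) : Prop :=
  l.head? = some s ∧ l.getLast? = some t ∧ (∀ c ∈ l, c ∈ P) ∧ l.Chain' hexAdj

/-- The first layer of `P`: cells of `P` adjacent to some cell not in `P`. -/
def hexFirstLayer (P : Finset HexCell) : Finset HexCell :=
  P.filter (fun c => (hexNbrs c \ P).Nonempty)

/-- The `ℓ`-offset of `P`: remove the first layer `ℓ` times. -/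
def hexOffset (ℓ : ℕ) (P : Finset HexCell) : Finset HexCell :=
  (fun Q => Q \ hexFirstLayer Q)^[ℓ] P

/-- The layer number of a cell `c` of `P`: the `ℓ ≥ 1` such that `c` lies in the
first layer of the `(ℓ-1)`-offset of `P`, i.e. the least `n` with `c ∉ hexOffset n P`. -/
noncomputable def hexLayerNum (P : Finset HexCell) (c : HexCell) : ℕ :=
  sInf {n : ℕ | c ∉ hexOffset n P}

/-- A cell `c` belongs to a narrow passage of `P` if it lies in the first layer of `P` and
removing it does not change the layer number of any other cell. -/
def hexNarrowCell (P : Finset HexCell) (c : HexCell) : Prop :=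
  c ∈ hexFirstLayer P ∧
    ∀ c' ∈ P.erase c, hexLayerNum (P.erase c) c' = hexLayerNum P c'

/-- `P` has a split cell in its first layer: there is a set `Q` consisting of a single
first-layer cell, or of two adjacent first-layer cells, with `P \\ Q` disconnected. -/
def hexSplitInFirstLayer (P : Finset HexCell) : Prop :=
  ∃ Q : Finset HexCell,
    ((∃ a ∈ hexFirstLayer P, Q = {a}) ∨
      (∃ a ∈ hexFirstLayer P, ∃ b ∈ hexFirstLayer P, a ≠ b ∧ hexAdj a b ∧ Q = {a, b})) ∧
    ¬ connectedOn hexAdj (↑(P \ Q) : Set HexCell)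

/-- Graph distance in the (full) hexagonal grid: least number of steps between
adjacent cells needed to go from `a` to `b`. -/
noncomputable def hexDist (a b : HexCell) : ℕ :=
  sInf {n : ℕ | ∃ w : ℕ → HexCell, w 0 = a ∧ w n = b ∧ ∀ i < n, hexAdj (w i) (w (i + 1))}

namespace HexAux

def rowF : Fin 3 → HexCell → ℤ
  | 0, c => c.2
  | 1, c => c.1
  | 2, c => c.1 + c.2

def lenF : Fin 3 → HexCell → ℤ
  | 0, c => c.1
  | 1, c => c.2
  | 2, c => c.1

def sdir : Fin 3 → Bool → HexCell
  | 0, true => (1, 0)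
  | 0, false => (-1, 0)
  | 1, true => (0, 1)
  | 1, false => (0, -1)
  | 2, true => (1, -1)
  | 2, false => (-1, 1)

lemma hexAdj_iff (a b : HexCell) :
    hexAdj a b ↔ b = (a.1 + 1, a.2) ∨ b = (a.1 - 1, a.2) ∨ b = (a.1, a.2 + 1) ∨
      b = (a.1, a.2 - 1) ∨ b = (a.1 + 1, a.2 - 1) ∨ b = (a.1 - 1, a.2 + 1) := by
  simp [hexAdj, hexNbrs]

lemma hexAdj_add_sdir (a : HexCell) (o : Fin 3) (b : Bool) : hexAdj a (a + sdir o b) := by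
  fin_cases o <;> cases b <;>
    simp [hexAdj, hexNbrs, sdir, Prod.ext_iff] <;> omega

lemma sdir_injective : ∀ o o' : Fin 3, ∀ b b' : Bool,
    sdir o b = sdir o' b' → o = o' ∧ b = b' := by decide

/-- each adjacency step changes exactly two of the three row coordinates -/
lemma step_rowchanges (a b : HexCell) (h : hexAdj a b) :
    ∑ o : Fin 3, (if rowF o a ≠ rowF o b then 1 else 0) = 2 := by
  rw [hexAdj_iff] at h
  rcases h with h | h | h | h | h | h <;> subst h <;>
    simp only [Fin.sum_univ_three] <;> split_ifs <;> simp only [rowF] at * <;> omega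

lemma step_len_le (a b : HexCell) (o : Fin 3) (h : hexAdj a b) :
    |lenF o b - lenF o a| ≤ 1 := by
  rw [hexAdj_iff] at h
  fin_cases o <;>
    rcases h with h | h | h | h | h | h <;> subst h <;> simp [lenF] <;> omega

/-- If a step increases `lenF o` by `ε = ±1` (the len of `sdir o b`), then the row change
has a fixed sign `σ o b` depending only on `(o, b)`; in fact row change ∈ {0, σ}. And if
the row change is the nonzero option... we only need: rowchange ∈ {0, σ o b} with σ ≠ 0,
and rowchange = 0 → the step is exactly sdir o b. -/
def sgn : Fin 3 → Bool → ℤ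
  | 0, true => -1
  | 0, false => 1
  | 1, true => -1
  | 1, false => 1
  | 2, true => 1
  | 2, false => -1

lemma step_forced (a b : HexCell) (o : Fin 3) (bb : Bool) (h : hexAdj a b)
    (hl : lenF o b - lenF o a = lenF o (sdir o bb)) :
    rowF o b - rowF o a = 0 ∨ rowF o b - rowF o a = sgn o bb := by
  rw [hexAdj_iff] at h
  fin_cases o <;> cases bb <;>
    rcases h with h | h | h | h | h | h <;> subst h <;>
      simp [lenF, rowF, sdir, sgn] at hl ⊢ <;> omega

lemma sgn_ne_zero (o : Fin 3) (b : Bool) : sgn o b ≠ 0 := by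
  fin_cases o <;> cases b <;> simp [sgn]

lemma lenF_sdir (o : Fin 3) (b : Bool) : lenF o (sdir o b) = if b then 1 else -1 := by
  fin_cases o <;> cases b <;> simp [lenF, sdir]

lemma rowF_sdir (o : Fin 3) (b : Bool) : rowF o (sdir o b) = 0 := by
  fin_cases o <;> cases b <;> simp [rowF, sdir]

lemma rowF_add (o : Fin 3) (x y : HexCell) : rowF o (x + y) = rowF o x + rowF o y := by
  fin_cases o <;> simp [rowF, Prod.fst_add, Prod.snd_add] <;> ring

lemma lenF_add (o : Fin 3) (x y : HexCell) : lenF o (x + y) = lenF o x + lenF o y := by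
  fin_cases o <;> simp [lenF, Prod.fst_add, Prod.snd_add]

lemma sdir_ne_zero : ∀ (o : Fin 3) (b : Bool), sdir o b ≠ (0 : HexCell) := by decide

end HexAux

namespace HexAux

/-- A walk in `P` from `a` to `b` with `n` steps. -/
def IsWalk (P : Finset HexCell) (w : ℕ → HexCell) (n : ℕ) (a b : HexCell) : Prop :=
  w 0 = a ∧ w n = b ∧ (∀ i ≤ n, w i ∈ P) ∧ ∀ i < n, hexAdj (w i) (w (i + 1))

lemma exists_walk {P : Finset HexCell} (hconn : connectedOn hexAdj (↑P : Set HexCell))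
    {a b : HexCell} (ha : a ∈ P) (hb : b ∈ P) : ∃ n w, IsWalk P w n a b := by
  have h := hconn a ha b hb
  induction h with
  | refl => exact ⟨0, fun _ => a, rfl, rfl, fun i _ => ha, fun i hi => absurd hi (by omega)⟩
  | @tail c b h hcb ih =>
    obtain ⟨n, w, hw0, hwn, hwP, hwA⟩ := ih (by exact_mod_cast hcb.1)
    have hbP : b ∈ P := by exact_mod_cast hcb.2.1
    refine ⟨n + 1, fun i => if i ≤ n then w i else b, by simp [hw0], by simp, ?_, ?_⟩
    · intro i hi
      by_cases h' : i ≤ n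
      · simpa [h'] using hwP i h'
      · simpa [h'] using hbP
    · intro i hi
      by_cases h' : i < n
      · simpa [Nat.le_of_lt h', Nat.succ_le_of_lt h'] using hwA i h'
      · have hin : i = n := by omega
        subst hin
        have : ¬ (i + 1 ≤ i) := by omega
        simpa [this, hwn] using hcb.2.2

/-- splice two walks -/
lemma IsWalk.splice {P : Finset HexCell} {w1 w2 : ℕ → HexCell} {n1 n2 : ℕ} {a x b : HexCell}
    (h1 : IsWalk P w1 n1 a x) (h2 : IsWalk P w2 n2 x b) :
    ∃ w, IsWalk P w (n1 + n2) a b := by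
  obtain ⟨h10, h1n, h1P, h1A⟩ := h1
  obtain ⟨h20, h2n, h2P, h2A⟩ := h2
  refine ⟨fun i => if i ≤ n1 then w1 i else w2 (i - n1), by simp [h10], ?_, ?_, ?_⟩
  · by_cases h' : n1 + n2 ≤ n1
    · have hn2 : n2 = 0 := by omega
      subst hn2
      simp only [Nat.add_zero, le_refl, if_pos]
      rw [h1n, ← h20]
      exact h2n
    · simpa [h', show n1 + n2 - n1 = n2 by omega] using h2n
  · intro i hi
    by_cases h' : i ≤ n1
    · simpa [h'] using h1P i h'
    · simpa [h'] using h2P (i - n1) (by omega)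
  · intro i hi
    rcases lt_trichotomy i n1 with h' | h' | h'
    · simpa [Nat.le_of_lt h', Nat.succ_le_of_lt h'] using h1A i h'
    · subst h'
      have hn2 : 0 < n2 := by omega
      have : ¬ (i + 1 ≤ i) := by omega
      simpa [this, show i + 1 - i = 1 by omega, h1n, ← h20] using h2A 0 hn2
    · have e1 : ¬ (i ≤ n1) := by omega
      have e2 : ¬ (i + 1 ≤ n1) := by omega
      simpa [e1, e2, show i + 1 - n1 = (i - n1) + 1 by omega] using h2A (i - n1) (by omega)

/-- a subwalk -/
lemma IsWalk.sub {P : Finset HexCell} {w : ℕ → HexCell} {n : ℕ} {a b : HexCell}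
    (h : IsWalk P w n a b) {i j : ℕ} (hij : i ≤ j) (hj : j ≤ n) :
    IsWalk P (fun k => w (i + k)) (j - i) (w i) (w j) := by
  obtain ⟨h0, hn, hP, hA⟩ := h
  refine ⟨by simp, by simp [show i + (j - i) = j by omega], ?_, ?_⟩
  · intro k hk; exact hP _ (by omega)
  · intro k hk
    simpa [show i + (k + 1) = (i + k) + 1 by omega] using hA (i + k) (by omega)

/-- straight segment walk along repeated direction e (all cells assumed in P) -/
lemma seg_walk {P : Finset HexCell} (c : HexCell) (o : Fin 3) (b : Bool) (m : ℕ)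
    (hmem : ∀ t ≤ m, c + t • sdir o b ∈ P) :
    IsWalk P (fun t => c + t • sdir o b) m c (c + m • sdir o b) := by
  refine ⟨by simp, rfl, hmem, ?_⟩
  intro i hi
  show hexAdj (c + i • sdir o b) (c + (i + 1) • sdir o b)
  have : c + (i + 1) • sdir o b = (c + i • sdir o b) + sdir o b := by
    rw [succ_nsmul]; abel
  rw [this]
  exact hexAdj_add_sdir _ o b

end HexAux
namespace HexAux

lemma shift_smul (c e : HexCell) (n : ℕ) : c + e + n • e = c + (n + 1) • e := by
  rw [succ_nsmul]; abel

lemma shift_smul' (c e : HexCell) (n : ℕ) : c + n • e + e = c + (n + 1) • e := by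
  rw [succ_nsmul]; abel

lemma exists_out (P : Finset HexCell) (c : HexCell) (o : Fin 3) (b : Bool) :
    ∃ k : ℕ, c + (k + 1) • sdir o b ∉ P := by
  by_contra h
  push_neg at h
  have hinj : Function.Injective (fun k : ℕ => c + (k + 1) • sdir o b) := by
    intro k k' hkk
    simp only at hkk
    have h2 : (((k : ℤ) + 1)) • sdir o b = (((k' : ℤ) + 1)) • sdir o b := by
      have := add_left_cancel hkk
      rw [← natCast_zsmul, ← natCast_zsmul] at this
      push_cast at this
      exact this
    have := smul_left_injective ℤ (sdir_ne_zero o b) h2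
    omega
  exact (Set.infinite_of_injective_forall_mem hinj (fun k => h k)) P.finite_toSet

noncomputable def runLen (P : Finset HexCell) (c : HexCell) (o : Fin 3) (b : Bool) : ℕ :=
  Nat.find (exists_out P c o b)

noncomputable def runEnd (P : Finset HexCell) (c : HexCell) (o : Fin 3) (b : Bool) : HexCell :=
  c + (runLen P c o b) • sdir o b

lemma runLen_out (P : Finset HexCell) (c : HexCell) (o : Fin 3) (b : Bool) :
    c + (runLen P c o b + 1) • sdir o b ∉ P := Nat.find_spec (exists_out P c o b)

lemma runLen_mem {P : Finset HexCell} {c : HexCell} (hc : c ∈ P) (o : Fin 3) (b : Bool) :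
    ∀ j ≤ runLen P c o b, c + j • sdir o b ∈ P := by
  intro j hj
  cases j with
  | zero => simpa using hc
  | succ i =>
    have hi : i < runLen P c o b := by omega
    have := Nat.find_min (exists_out P c o b) (m := i) hi
    simpa using this

lemma runEnd_mem {P : Finset HexCell} {c : HexCell} (hc : c ∈ P) (o : Fin 3) (b : Bool) :
    runEnd P c o b ∈ P := runLen_mem hc o b _ le_rfl

lemma runEnd_out (P : Finset HexCell) (c : HexCell) (o : Fin 3) (b : Bool) :
    runEnd P c o b + sdir o b ∉ P := by
  have := runLen_out P c o b
  rwa [← shift_smul, show c + sdir o b + runLen P c o b • sdir o b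
    = c + runLen P c o b • sdir o b + sdir o b by abel] at this

lemma runLen_succ {P : Finset HexCell} {c : HexCell} {o : Fin 3} {b : Bool}
    (hce : c + sdir o b ∈ P) :
    runLen P c o b = runLen P (c + sdir o b) o b + 1 := by
  show Nat.find (exists_out P c o b) = runLen P (c + sdir o b) o b + 1
  rw [Nat.find_eq_iff]
  constructor
  · have := runLen_out P (c + sdir o b) o b
    rwa [shift_smul] at this
  · intro n hn
    simp only [not_not]
    cases n with
    | zero => simpa using hce
    | succ i =>
      have := runLen_mem hce o b (i + 1) (by omega)
      rwa [shift_smul] at this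

lemma runEnd_step {P : Finset HexCell} {c : HexCell} {o : Fin 3} {b : Bool}
    (hce : c + sdir o b ∈ P) :
    runEnd P c o b = runEnd P (c + sdir o b) o b := by
  rw [runEnd, runEnd, runLen_succ hce, shift_smul]

lemma runEnd_seg {P : Finset HexCell} {c : HexCell} {o : Fin 3} {b : Bool} (j : ℕ)
    (hseg : ∀ t ≤ j, c + t • sdir o b ∈ P) :
    runEnd P c o b = runEnd P (c + j • sdir o b) o b := by
  induction j with
  | zero => simp
  | succ i ih =>
    have h2 : c + i • sdir o b + sdir o b ∈ P := by
      rw [shift_smul']; exact hseg (i + 1) le_rfl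
    rw [ih (fun t ht => hseg t (by omega)), runEnd_step h2, shift_smul']

/-- cells with the same run end lie on a common segment inside `P` -/
lemma same_runEnd {P : Finset HexCell} {c c' : HexCell} {o : Fin 3} {b : Bool}
    (hc : c ∈ P) (hc' : c' ∈ P) (h : runEnd P c o b = runEnd P c' o b) :
    (∃ m : ℕ, c = c' + m • sdir o b ∧ ∀ t ≤ m, c' + t • sdir o b ∈ P) ∨
    (∃ m : ℕ, c' = c + m • sdir o b ∧ ∀ t ≤ m, c + t • sdir o b ∈ P) := by
  have h' : c + runLen P c o b • sdir o b = c' + runLen P c' o b • sdir o b := h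
  set k := runLen P c o b with hk
  set k' := runLen P c' o b with hk'
  rcases le_total k k' with hle | hle
  · left
    refine ⟨k' - k, ?_, fun t ht => runLen_mem hc' o b t (by omega)⟩
    have hsum : (k' - k) • sdir o b + k • sdir o b = k' • sdir o b := by
      rw [← add_nsmul]; congr 1; omega
    have : c + k • sdir o b = c' + (k' - k) • sdir o b + k • sdir o b := by
      rw [add_assoc, hsum]; exact h'
    exact add_right_cancel this
  · right
    refine ⟨k - k', ?_, fun t ht => runLen_mem hc o b t (by omega)⟩
    have hsum : (k - k') • sdir o b + k' • sdir o b = k • sdir o b := by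
      rw [← add_nsmul]; congr 1; omega
    have : c' + k' • sdir o b = c + (k - k') • sdir o b + k' • sdir o b := by
      rw [add_assoc, hsum]; exact h'.symm
    exact add_right_cancel this

lemma rowF_zero (o : Fin 3) : rowF o (0 : HexCell) = 0 := by
  fin_cases o <;> simp [rowF]

lemma rowF_nsmul_sdir (o : Fin 3) (b : Bool) (n : ℕ) : rowF o (n • sdir o b) = 0 := by
  induction n with
  | zero => simpa using rowF_zero o
  | succ i ih => rw [succ_nsmul, rowF_add, ih, rowF_sdir]; ring

lemma lenF_nsmul_sdir (o : Fin 3) (b : Bool) (n : ℕ) :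
    lenF o (n • sdir o b) = n * (if b then 1 else -1) := by
  induction n with
  | zero =>
    have : lenF o (0 : HexCell) = 0 := by fin_cases o <;> simp [lenF]
    simpa using this
  | succ i ih =>
    rw [succ_nsmul, lenF_add, ih, lenF_sdir]
    push_cast; ring

lemma rowF_runEnd (P : Finset HexCell) (c : HexCell) (o : Fin 3) (b : Bool) :
    rowF o (runEnd P c o b) = rowF o c := by
  rw [runEnd, rowF_add, rowF_nsmul_sdir]; ring

end HexAux
namespace HexAux

lemma sdir_not : ∀ (o : Fin 3) (b : Bool), sdir o (!b) = - sdir o b := by decide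

lemma sgn_cases : ∀ (o : Fin 3) (b : Bool), sgn o b = 1 ∨ sgn o b = -1 := by decide

lemma forced {m : ℕ} {x : ℕ → ℤ} {ε : ℤ} (hε : ε = 1 ∨ ε = -1)
    (h1 : ∀ t ∈ Finset.range m, |x t| ≤ 1)
    (h2 : ∑ t ∈ Finset.range m, x t = ε * m) : ∀ t ∈ Finset.range m, x t = ε := by
  have hz : ∑ t ∈ Finset.range m, (1 - ε * x t) = 0 := by
    rw [Finset.sum_sub_distrib, ← Finset.mul_sum, h2, Finset.sum_const, Finset.card_range,
      nsmul_eq_mul, mul_one]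
    rcases hε with h | h <;> subst h <;> ring
  have hnn : ∀ t ∈ Finset.range m, 0 ≤ 1 - ε * x t := by
    intro t ht
    have h4 := h1 t ht
    rw [abs_le] at h4
    rcases hε with h | h <;> subst h <;> omega
  have hall := (Finset.sum_eq_zero_iff_of_nonneg hnn).mp hz
  intro t ht
  have h3 := hall t ht
  have h4 := h1 t ht
  rw [abs_le] at h4
  rcases hε with h | h <;> subst h <;> omega

lemma len_walk_bound {w : ℕ → HexCell} (o : Fin 3) :
    ∀ n : ℕ, (∀ t < n, hexAdj (w t) (w (t + 1))) →
      |lenF o (w n) - lenF o (w 0)| ≤ (n : ℤ) := by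
  intro n
  induction n with
  | zero => simp
  | succ n ih =>
    intro h
    have h1 := ih (fun t ht => h t (by omega))
    have h2 := step_len_le (w n) (w (n + 1)) o (h n (by omega))
    calc |lenF o (w (n + 1)) - lenF o (w 0)|
        ≤ |lenF o (w (n + 1)) - lenF o (w n)| + |lenF o (w n) - lenF o (w 0)| :=
          abs_sub_le _ _ _
      _ ≤ 1 + n := add_le_add h2 h1
      _ = ((n + 1 : ℕ) : ℤ) := by push_cast; ring

lemma same_runEnd' {P : Finset HexCell} {c c' : HexCell} {o : Fin 3} {b : Bool}
    (hc : c ∈ P) (hc' : c' ∈ P) (h : runEnd P c o b = runEnd P c' o b) :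
    ∃ (bb : Bool) (m : ℕ), c' = c + m • sdir o bb ∧ ∀ t ≤ m, c + t • sdir o bb ∈ P := by
  rcases same_runEnd hc hc' h with ⟨m, hm, hseg⟩ | ⟨m, hm, hseg⟩
  · refine ⟨!b, m, ?_, ?_⟩
    · rw [sdir_not, hm, smul_neg]
      abel
    · intro t ht
      have h1 : (m - t) • sdir o b + t • sdir o b = m • sdir o b := by
        rw [← add_nsmul]; congr 1; omega
      have h2 : c + t • sdir o (!b) = c' + (m - t) • sdir o b := by
        rw [sdir_not, hm, smul_neg, ← h1]; abel
      rw [h2]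
      exact hseg (m - t) (by omega)
  · exact ⟨b, m, hm, hseg⟩

/-- `i` is an entry time for orientation `o` along the walk `w`. -/
def Entry (w : ℕ → HexCell) (o : Fin 3) (i : ℕ) : Prop :=
  i = 0 ∨ (0 < i ∧ rowF o (w (i - 1)) ≠ rowF o (w i))

instance (w : ℕ → HexCell) (o : Fin 3) : DecidablePred (Entry w o) := fun i => by
  unfold Entry; infer_instance

lemma entry_unique_aux {P : Finset HexCell} {w : ℕ → HexCell} {d : ℕ} {s t : HexCell}
    (hw : IsWalk P w d s t) (hmin : ∀ n < d, ∀ w' : ℕ → HexCell, ¬ IsWalk P w' n s t)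
    (o : Fin 3) (b : Bool) {i i' : ℕ} (hii' : i < i') (hi' : i' ≤ d)
    (hei' : Entry w o i')
    (hrun : runEnd P (w i) o b = runEnd P (w i') o b) : False := by
  have hiP : w i ∈ P := hw.2.2.1 i (by omega)
  have hi'P : w i' ∈ P := hw.2.2.1 i' hi'
  obtain ⟨bb, m, hm, hseg⟩ := same_runEnd' hiP hi'P hrun
  have wA : IsWalk P (fun k => w (0 + k)) (i - 0) (w 0) (w i) :=
    hw.sub (by omega) (by omega)
  have wB : IsWalk P (fun k => w (i' + k)) (d - i') (w i') (w d) := hw.sub hi' le_rfl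
  have wS : IsWalk P (fun k => w i + k • sdir o bb) m (w i) (w i') := by
    have := seg_walk (w i) o bb m hseg
    rwa [← hm] at this
  obtain ⟨w1, hw1⟩ := wA.splice wS
  obtain ⟨w2, hw2⟩ := hw1.splice wB
  rw [hw.1, hw.2.1] at hw2
  by_cases hcase : m < i' - i
  · exact hmin _ (by omega) w2 hw2
  · have hlb : |lenF o (w i') - lenF o (w i)| ≤ ((i' - i : ℕ) : ℤ) := by
      have hb := len_walk_bound (w := fun k => w (i + k)) o (i' - i)
        (fun u hu => hw.2.2.2 (i + u) (by omega))
      simpa [show i + (i' - i) = i' by omega] using hb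
    have hd : lenF o (w i') - lenF o (w i) = (m : ℤ) * (if bb then 1 else -1) := by
      rw [hm, lenF_add, lenF_nsmul_sdir]; ring
    have habs : |lenF o (w i') - lenF o (w i)| = (m : ℤ) := by
      rw [hd]; cases bb <;> simp
    have hmle : m ≤ i' - i := by
      rw [habs] at hlb; exact_mod_cast hlb
    have hmeq : m = i' - i := by omega
    have hm0 : 0 < m := by omega
    set ε : ℤ := if bb then 1 else -1 with hε
    have hεc : ε = 1 ∨ ε = -1 := by cases bb <;> simp [hε]
    have hsum : ∑ u ∈ Finset.range m, (lenF o (w (i + (u + 1))) - lenF o (w (i + u))) = ε * m := by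
      rw [Finset.sum_range_sub (fun k => lenF o (w (i + k))) m]
      simp only [Nat.add_zero, show i + m = i' by omega]
      rw [hd, hε]; ring
    have hstep1 : ∀ u ∈ Finset.range m, |lenF o (w (i + (u + 1))) - lenF o (w (i + u))| ≤ 1 := by
      intro u hu
      simp only [Finset.mem_range] at hu
      exact step_len_le _ _ o (hw.2.2.2 (i + u) (by omega))
    have hforced := forced hεc hstep1 hsum
    have hrow0 : rowF o (w i') = rowF o (w i) := by
      rw [hm, rowF_add, rowF_nsmul_sdir]; ring
    have hrsum : ∑ u ∈ Finset.range m, (rowF o (w (i + (u + 1))) - rowF o (w (i + u))) = 0 := by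
      rw [Finset.sum_range_sub (fun k => rowF o (w (i + k))) m]
      simp only [Nat.add_zero, show i + m = i' by omega]
      rw [hrow0]; ring
    have hropt : ∀ u ∈ Finset.range m, rowF o (w (i + (u + 1))) - rowF o (w (i + u)) = 0 ∨
        rowF o (w (i + (u + 1))) - rowF o (w (i + u)) = sgn o bb := by
      intro u hu
      simp only [Finset.mem_range] at hu
      apply step_forced _ _ o bb (hw.2.2.2 (i + u) (by omega))
      rw [lenF_sdir, ← hε]
      exact hforced u (Finset.mem_range.mpr hu)
    have hallz : ∀ u ∈ Finset.range m, rowF o (w (i + (u + 1))) - rowF o (w (i + u)) = 0 := by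
      rcases sgn_cases o bb with hs | hs
      · refine (Finset.sum_eq_zero_iff_of_nonneg ?_).mp hrsum
        intro u hu
        rcases hropt u hu with h | h <;> rw [h] <;> omega
      · refine (Finset.sum_eq_zero_iff_of_nonpos ?_).mp hrsum
        intro u hu
        rcases hropt u hu with h | h <;> rw [h] <;> omega
    have hlast := hallz (m - 1) (Finset.mem_range.mpr (by omega))
    rw [show i + (m - 1 + 1) = i' by omega, show i + (m - 1) = i' - 1 by omega,
      sub_eq_zero] at hlast
    rcases hei' with h | h
    · omega
    · exact h.2 hlast.symm

lemma entry_unique {P : Finset HexCell} {w : ℕ → HexCell} {d : ℕ} {s t : HexCell}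
    (hw : IsWalk P w d s t) (hmin : ∀ n < d, ∀ w' : ℕ → HexCell, ¬ IsWalk P w' n s t)
    (o : Fin 3) (b : Bool) {i i' : ℕ} (hi : i ≤ d) (hi' : i' ≤ d)
    (hei : Entry w o i) (hei' : Entry w o i')
    (hrun : runEnd P (w i) o b = runEnd P (w i') o b) : i = i' := by
  rcases lt_trichotomy i i' with h | h | h
  · exact (entry_unique_aux hw hmin o b h hi' hei' hrun).elim
  · exact h
  · exact (entry_unique_aux hw hmin o b h hi hei hrun.symm).elim

end HexAux
namespace HexAux

lemma main_count {P : Finset HexCell} {w : ℕ → HexCell} {d : ℕ} {s t : HexCell}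
    (hw : IsWalk P w d s t) (hmin : ∀ n < d, ∀ w' : ℕ → HexCell, ¬ IsWalk P w' n s t) :
    4 * d + 6 ≤ hexPerim P := by
  classical
  set A : Fin 3 → Finset ℕ := fun o => (Finset.range (d + 1)).filter (Entry w o) with hA
  -- cardinality of entry sets
  have hsplit : ∀ o, A o = insert 0 ((Finset.range (d + 1)).filter
      (fun i => 0 < i ∧ rowF o (w (i - 1)) ≠ rowF o (w i))) := by
    intro o
    ext i
    simp only [hA, Finset.mem_filter, Finset.mem_insert, Finset.mem_range, Entry]
    constructor
    · rintro ⟨hr, h0 | h1⟩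
      · exact Or.inl h0
      · exact Or.inr ⟨hr, h1⟩
    · rintro (h0 | ⟨hr, h1⟩)
      · subst h0; exact ⟨by omega, Or.inl rfl⟩
      · exact ⟨hr, Or.inr h1⟩
  have hBcard : ∀ o : Fin 3,
      ((Finset.range (d + 1)).filter (fun i => 0 < i ∧ rowF o (w (i - 1)) ≠ rowF o (w i))).card
      = ((Finset.range d).filter (fun j => rowF o (w j) ≠ rowF o (w (j + 1)))).card := by
    intro o
    refine Finset.card_bij' (fun i _ => i - 1) (fun j _ => j + 1) ?hi ?hj ?left ?right
    case hi =>
      intro a ha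
      simp only [Finset.mem_filter, Finset.mem_range] at ha ⊢
      refine ⟨by omega, ?_⟩
      rw [show a - 1 + 1 = a by omega]
      exact ha.2.2
    case hj =>
      intro a ha
      simp only [Finset.mem_filter, Finset.mem_range] at ha ⊢
      refine ⟨by omega, by omega, ?_⟩
      rw [show a + 1 - 1 = a by omega]
      exact ha.2
    case left =>
      intro a ha
      simp only [Finset.mem_filter, Finset.mem_range] at ha
      show a - 1 + 1 = a
      omega
    case right =>
      intro a ha
      show a + 1 - 1 = a
      omega
  have hCsum : ∑ o : Fin 3,
      ((Finset.range d).filter (fun j => rowF o (w j) ≠ rowF o (w (j + 1)))).card = 2 * d := by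
    have h1 : ∀ o : Fin 3,
        ((Finset.range d).filter (fun j => rowF o (w j) ≠ rowF o (w (j + 1)))).card
        = ∑ j ∈ Finset.range d, (if rowF o (w j) ≠ rowF o (w (j + 1)) then 1 else 0) := by
      intro o; rw [Finset.card_filter]
    calc ∑ o : Fin 3, ((Finset.range d).filter
          (fun j => rowF o (w j) ≠ rowF o (w (j + 1)))).card
        = ∑ o : Fin 3, ∑ j ∈ Finset.range d,
            (if rowF o (w j) ≠ rowF o (w (j + 1)) then 1 else 0) := by
          exact Finset.sum_congr rfl (fun o _ => h1 o)
      _ = ∑ j ∈ Finset.range d, ∑ o : Fin 3,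
            (if rowF o (w j) ≠ rowF o (w (j + 1)) then 1 else 0) := Finset.sum_comm
      _ = ∑ j ∈ Finset.range d, 2 := by
          refine Finset.sum_congr rfl (fun j hj => ?_)
          exact step_rowchanges _ _ (hw.2.2.2 j (Finset.mem_range.mp hj))
      _ = 2 * d := by simp [mul_comm]
  have hAcard : ∑ o : Fin 3, (A o).card = 2 * d + 3 := by
    have h2 : ∀ o : Fin 3, (A o).card
        = ((Finset.range d).filter (fun j => rowF o (w j) ≠ rowF o (w (j + 1)))).card + 1 := by
      intro o
      rw [hsplit o, Finset.card_insert_of_notMem (by simp), hBcard o]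
    calc ∑ o : Fin 3, (A o).card
        = ∑ o : Fin 3, (((Finset.range d).filter
            (fun j => rowF o (w j) ≠ rowF o (w (j + 1)))).card + 1) :=
          Finset.sum_congr rfl (fun o _ => h2 o)
      _ = 2 * d + 3 := by rw [Finset.sum_add_distrib, hCsum]; simp
  -- the injection into boundary darts
  set D := (Finset.univ : Finset (Fin 3)).sigma (fun o => (A o) ×ˢ (Finset.univ : Finset Bool))
    with hD
  set T := P.sigma (fun c => hexNbrs c \ P) with hT
  have hDcard : D.card = 4 * d + 6 := by
    rw [hD, Finset.card_sigma]
    calc ∑ o ∈ (Finset.univ : Finset (Fin 3)), ((A o) ×ˢ (Finset.univ : Finset Bool)).card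
        = ∑ o : Fin 3, (A o).card * 2 := by
          refine Finset.sum_congr rfl (fun o _ => ?_)
          rw [Finset.card_product]
          simp
      _ = (∑ o : Fin 3, (A o).card) * 2 := (Finset.sum_mul ..).symm
      _ = 4 * d + 6 := by rw [hAcard]; ring
  have hTcard : T.card = hexPerim P := by
    rw [hT, Finset.card_sigma, hexPerim]
  have hDT : D.card ≤ T.card := by
    apply Finset.card_le_card_of_injOn
      (fun x => ⟨runEnd P (w x.2.1) x.1 x.2.2, runEnd P (w x.2.1) x.1 x.2.2 + sdir x.1 x.2.2⟩)
    · rintro ⟨o, i, b⟩ hx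
      simp only [Finset.mem_coe, hD, Finset.mem_sigma, Finset.mem_product, Finset.mem_univ, true_and,
        and_true] at hx
      have hir : i ∈ Finset.range (d + 1) := (Finset.mem_filter.mp hx).1
      have hiP : w i ∈ P := hw.2.2.1 i (by have := Finset.mem_range.mp hir; omega)
      simp only [Finset.mem_coe, hT, Finset.mem_sigma, Finset.mem_sdiff]
      exact ⟨runEnd_mem hiP o b, hexAdj_add_sdir _ o b, runEnd_out P (w i) o b⟩
    · rintro ⟨o, i, b⟩ hx ⟨o', i', b'⟩ hy hxy
      simp only [hD, Finset.coe_sigma, Set.mem_sigma_iff, Finset.coe_product, Set.mem_prod,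
        Finset.mem_coe, Finset.coe_univ, Set.mem_univ, true_and, and_true] at hx hy
      simp only [Sigma.mk.inj_iff] at hxy
      obtain ⟨h1, h2⟩ := hxy
      have h2' := eq_of_heq h2
      rw [h1] at h2'
      obtain ⟨ho, hb⟩ := sdir_injective _ _ _ _ (add_left_cancel h2')
      subst ho
      subst hb
      have hxm := Finset.mem_filter.mp hx
      have hym := Finset.mem_filter.mp hy
      have hii : i = i' := entry_unique hw hmin o b
        (by have := Finset.mem_range.mp hxm.1; omega)
        (by have := Finset.mem_range.mp hym.1; omega) hxm.2 hym.2 h1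
      rw [hii]
  omega

end HexAux

/-- For any two cells `s`, `t` of a simple hexagonal grid polygon `P`, the length of a
shortest path in `P` from `s` to `t` is at most `E(P)/4 − 3/2`: there is a path in `P`
from `s` to `t` with at most that many steps. -/
theorem hex_shortest_path_bound (P : Finset HexCell)
    (hP : hexPolygon P) (hS : hexSimple P)
    (s t : HexCell) (hs : s ∈ P) (ht : t ∈ P) :
    ∃ l : List HexCell, IsHexPathIn P l s t ∧
      (l.length : ℚ) - 1 ≤ (hexPerim P : ℚ) / 4 - 3 / 2 := by
  classical
  have hex : ∃ n, ∃ w, HexAux.IsWalk P w n s t := HexAux.exists_walk hP.2 hs ht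
  set d := Nat.find hex with hd
  obtain ⟨w, hw⟩ := Nat.find_spec hex
  have hmin : ∀ n < d, ∀ w' : ℕ → HexCell, ¬ HexAux.IsWalk P w' n s t :=
    fun n hn w' hw' => Nat.find_min hex hn ⟨w', hw'⟩
  have hcount := HexAux.main_count hw hmin
  refine ⟨(List.range (d + 1)).map w, ⟨?_, ?_, ?_, ?_⟩, ?_⟩
  · rw [List.head?_map, List.range_succ_eq_map]
    simp [hw.1]
  · rw [List.range_succ, List.map_append]
    simp [List.getLast?_concat, hw.2.1, hd]
  · intro c hc
    simp only [List.mem_map, List.mem_range] at hc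
    obtain ⟨i, hi, rfl⟩ := hc
    exact hw.2.2.1 i (by omega)
  · show List.IsChain hexAdj _
    rw [List.isChain_map, List.isChain_range_succ]
    intro m hm
    exact hw.2.2.2 m hm
  · have hlen : ((List.range (d + 1)).map w).length = d + 1 := by simp
    rw [hlen]
    have hc : (4 * d + 6 : ℚ) ≤ (hexPerim P : ℚ) := by exact_mod_cast hcount
    push_cast
    linarith
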